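/- Let n ≥ 4 be an integer and let t* ∈ (0,1) be a critical point of g_n, i.e., g_n'(t*) = −((4n−4)/(4n−1))·(2t*−1)^{2n−3} + (t*)^{2n−3}·(−(2n−2) + (2n−1)t*) = 0. Then g_n(t*) > (4n−13)/(4(n−1)(4n−1)²); in particular g_n(t*) > 0. -/

import Mathlib

/-- `g_n(t) = 4/(4n-1)² + (1 - (2t-1)^{2n-2})/(4n-1) - (1-t)·t^{2n-2}`. -/
noncomputable def gFun (n : ℕ) (t : ℝ) : ℝ :=
  4 / (4 * (n : ℝ) - 1) ^ 2 + (1 - (2 * t - 1) ^ (2 * n - 2)) / (4 * (n : ℝ) - 1)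
    - (1 - t) * t ^ (2 * n - 2)

lemma key_lt (m : ℕ) (hm : 1 ≤ m) (t : ℝ) (ht0 : 0 < t) (ht1 : t < 1) :
    t ^ m * (2 * t ^ 2 - ((m : ℝ) + 2) * t + ((m : ℝ) + 1)) < 1 := by
  have hS : (∑ k ∈ Finset.range m, t ^ k) * (t - 1) = t ^ m - 1 := geom_sum_mul t m
  have hsum : (m : ℝ) * t ^ m < ∑ k ∈ Finset.range m, t ^ k := by
    calc (m : ℝ) * t ^ m = ∑ _k ∈ Finset.range m, t ^ m := by
          rw [Finset.sum_const, Finset.card_range, nsmul_eq_mul]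
      _ < ∑ k ∈ Finset.range m, t ^ k := by
          apply Finset.sum_lt_sum_of_nonempty (Finset.nonempty_range_iff.mpr (by omega))
          intro k hk
          exact pow_lt_pow_right_of_lt_one₀ ht0 ht1 (Finset.mem_range.mp hk)
  have h1t : 0 < 1 - t := by linarith
  have hpos : 0 < (∑ k ∈ Finset.range m, t ^ k) - (m : ℝ) * t ^ m + 2 * (t ^ m * t) := by
    have := mul_pos (pow_pos ht0 m) ht0
    linarith
  have hid : 1 - t ^ m * (2 * t ^ 2 - ((m : ℝ) + 2) * t + ((m : ℝ) + 1))
      = (1 - t) * ((∑ k ∈ Finset.range m, t ^ k) - (m : ℝ) * t ^ m + 2 * (t ^ m * t)) := by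
    linear_combination hS
  have := mul_pos h1t hpos
  linarith [hid]


/-- For `n ≥ 4` and a critical point `t* ∈ (0,1)` of `g_n`, i.e.
`g_n'(t*) = -((4n-4)/(4n-1))·(2t*-1)^{2n-3} + (t*)^{2n-3}·(-(2n-2) + (2n-1)t*) = 0`,
one has `g_n(t*) > (4n-13)/(4(n-1)(4n-1)²)`; in particular `g_n(t*) > 0`. -/
theorem gFun_pos_at_critical (n : ℕ) (hn : 4 ≤ n) (t : ℝ) (ht : t ∈ Set.Ioo (0 : ℝ) 1)
    (hcrit : -((4 * (n : ℝ) - 4) / (4 * (n : ℝ) - 1)) * (2 * t - 1) ^ (2 * n - 3)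
        + t ^ (2 * n - 3) * (-(2 * (n : ℝ) - 2) + (2 * (n : ℝ) - 1) * t) = 0) :
    gFun n t > (4 * (n : ℝ) - 13) / (4 * ((n : ℝ) - 1) * (4 * (n : ℝ) - 1) ^ 2) ∧
      gFun n t > 0 := by
  obtain ⟨ht0, ht1⟩ := ht
  obtain ⟨k, rfl⟩ : ∃ k, n = k + 4 := ⟨n - 4, by omega⟩
  have he2 : 2 * (k + 4) - 2 = 2 * k + 6 := by omega
  have he3 : 2 * (k + 4) - 3 = 2 * k + 5 := by omega
  have hK0 : (0 : ℝ) ≤ (k : ℝ) := Nat.cast_nonneg k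
  have hcast : ((k + 4 : ℕ) : ℝ) = (k : ℝ) + 4 := by push_cast; ring
  rw [he3, hcast] at hcrit
  have h12 : (4 * (k : ℝ) + 12) ≠ 0 := by positivity
  have h15 : (0 : ℝ) < 4 * (k : ℝ) + 15 := by positivity
  have eq1 : (4 * (k : ℝ) + 12) * (2 * t - 1) ^ (2 * k + 5)
      = (4 * (k : ℝ) + 15) * (t ^ (2 * k + 5) * ((2 * (k : ℝ) + 7) * t - (2 * (k : ℝ) + 6))) := by
    have hA : (4 * ((k : ℝ) + 4) - 1) ≠ 0 := by nlinarith
    have h := hcrit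
    field_simp [hA] at h
    linear_combination -h
  have hu : (2 * t - 1) ^ (2 * k + 6)
      = (4 * (k : ℝ) + 15) * (t ^ (2 * k + 5) * ((2 * (k : ℝ) + 7) * t - (2 * (k : ℝ) + 6)))
          / (4 * (k : ℝ) + 12) * (2 * t - 1) := by
    rw [show 2 * k + 6 = (2 * k + 5) + 1 from by omega, pow_succ]
    rw [eq_comm, div_mul_eq_mul_div, div_eq_iff h12]
    linear_combination (1 - 2 * t) * eq1
  have hQ : t ^ (2 * k + 5) * (2 * t ^ 2 - (2 * (k : ℝ) + 7) * t + (2 * (k : ℝ) + 6)) < 1 := by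
    calc t ^ (2 * k + 5) * (2 * t ^ 2 - (2 * (k : ℝ) + 7) * t + (2 * (k : ℝ) + 6))
        = t ^ (2 * k + 5) * (2 * t ^ 2 - (((2 * k + 5 : ℕ) : ℝ) + 2) * t
            + (((2 * k + 5 : ℕ) : ℝ) + 1)) := by push_cast; ring
      _ < 1 := key_lt (2 * k + 5) (by omega) t ht0 ht1
  have hgf : gFun (k + 4) t = 4 / (4 * ((k : ℝ) + 4) - 1) ^ 2
      + (1 - (2 * t - 1) ^ (2 * k + 6)) / (4 * ((k : ℝ) + 4) - 1)
      - (1 - t) * t ^ (2 * k + 6) := by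
    unfold gFun
    rw [he2, hcast]
  have hD : (0 : ℝ) < 4 * (((k : ℝ) + 4) - 1) * (4 * ((k : ℝ) + 4) - 1) ^ 2 := by
    have h3 : (0 : ℝ) < (k : ℝ) + 3 := by linarith
    have := mul_pos h3 (pow_pos (show (0:ℝ) < 4 * ((k : ℝ) + 4) - 1 by linarith) 2)
    nlinarith [this]
  have h1 : gFun (k + 4) t
      - (4 * ((k : ℝ) + 4) - 13) / (4 * (((k : ℝ) + 4) - 1) * (4 * ((k : ℝ) + 4) - 1) ^ 2)
      = ((4 * (k : ℝ) + 15) ^ 2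
          * (1 - t ^ (2 * k + 5) * (2 * t ^ 2 - (2 * (k : ℝ) + 7) * t + (2 * (k : ℝ) + 6))))
        / (4 * (((k : ℝ) + 4) - 1) * (4 * ((k : ℝ) + 4) - 1) ^ 2) := by
    rw [hgf, hu]
    have h15' : (4 * ((k : ℝ) + 4) - 1) ≠ 0 := by nlinarith
    rw [div_add_div _ _ (pow_ne_zero 2 h15') h15', div_sub' (mul_ne_zero (pow_ne_zero 2 h15') h15'), div_sub_div _ _ (by positivity) (by positivity), div_eq_div_iff (by positivity) (by positivity)]
    field_simp
    ring
  have hnum : 0 < (4 * (k : ℝ) + 15) ^ 2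
      * (1 - t ^ (2 * k + 5) * (2 * t ^ 2 - (2 * (k : ℝ) + 7) * t + (2 * (k : ℝ) + 6))) :=
    mul_pos (pow_pos h15 2) (by linarith)
  have hmain : gFun (k + 4) t
      > (4 * ((k : ℝ) + 4) - 13) / (4 * (((k : ℝ) + 4) - 1) * (4 * ((k : ℝ) + 4) - 1) ^ 2) := by
    have := div_pos hnum hD
    linarith [h1]
  have hrhs : (0 : ℝ) < (4 * ((k : ℝ) + 4) - 13)
      / (4 * (((k : ℝ) + 4) - 1) * (4 * ((k : ℝ) + 4) - 1) ^ 2) :=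
    div_pos (by linarith) hD
  rw [hcast]
  exact ⟨hmain, by linarith⟩
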